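/- Let p, q ≥ 1 and let h(z,w) = Σ_{i=1}^{p} z_i·conj(w_i) − Σ_{i=p+1}^{p+q} z_i·conj(w_i) be the standard Hermitian form of signature (p,q) on ℂ^{p+q}. Let g_0 ∈ SU(p,q) be such that every eigenvector v ∈ ℂ^{p+q} of g_0 satisfies h(v,v) ≠ 0. Then there exists a neighborhood U of g_0 in SU(p,q) such that for every g ∈ U, every complex eigenvalue of g has modulus 1. -/

import Mathlib

open Matrix Topology Filter

/-- The matrix `J = diag(I_p, −I_q)`. -/
def Jmat (p q : ℕ) : Matrix (Fin (p + q)) (Fin (p + q)) ℂ :=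
  Matrix.diagonal fun i => if (i : ℕ) < p then 1 else -1

/-- The group `SU(p,q)`, as a set of `(p+q) × (p+q)` complex matrices. -/
def SU (p q : ℕ) : Set (Matrix (Fin (p + q)) (Fin (p + q)) ℂ) :=
  {M | M.det = 1 ∧ Mᴴ * Jmat p q * M = Jmat p q}

/-- The standard Hermitian form of signature `(p,q)` on `ℂ^{p+q}`. -/
noncomputable def hermForm (p q : ℕ) (z w : Fin (p + q) → ℂ) : ℂ :=
  ∑ i : Fin (p + q), (if (i : ℕ) < p then 1 else -1) * z i * (starRingEnd ℂ) (w i)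

lemma hermForm_eq (p q : ℕ) (z w : Fin (p + q) → ℂ) :
    hermForm p q z w = star w ⬝ᵥ (Jmat p q).mulVec z := by
  unfold hermForm Jmat
  rw [dotProduct]
  refine Finset.sum_congr rfl fun i _ => ?_
  rw [mulVec_diagonal, Pi.star_apply]
  simp only [Complex.star_def]
  ring

lemma hermForm_invariant (p q : ℕ) (M : Matrix (Fin (p + q)) (Fin (p + q)) ℂ)
    (hM : Mᴴ * Jmat p q * M = Jmat p q) (v : Fin (p + q) → ℂ) :
    hermForm p q (M.mulVec v) (M.mulVec v) = hermForm p q v v := by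
  rw [hermForm_eq, hermForm_eq, star_mulVec, mulVec_mulVec,
    ← dotProduct_mulVec, mulVec_mulVec, ← mul_assoc, hM]

lemma hermForm_smul (p q : ℕ) (μ : ℂ) (v : Fin (p + q) → ℂ) :
    hermForm p q (μ • v) (μ • v) = (μ * (starRingEnd ℂ) μ) * hermForm p q v v := by
  unfold hermForm
  rw [Finset.mul_sum]
  refine Finset.sum_congr rfl fun i _ => ?_
  simp only [Pi.smul_apply, smul_eq_mul, _root_.map_mul]
  ring

lemma continuous_hermForm (p q : ℕ) :
    Continuous fun v : Fin (p + q) → ℂ => hermForm p q v v := by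
  unfold hermForm
  refine continuous_finset_sum _ fun i _ => ?_
  exact ((continuous_const.mul (continuous_apply i)).mul
    (Complex.continuous_conj.comp (continuous_apply i)))

lemma eigen_isotropic (p q : ℕ) (M : Matrix (Fin (p + q)) (Fin (p + q)) ℂ)
    (hM : M ∈ SU p q) (μ : ℂ) (v : Fin (p + q) → ℂ)
    (heig : M.mulVec v = μ • v) (habs : ‖μ‖ ≠ 1) :
    hermForm p q v v = 0 := by
  have h1 := hermForm_invariant p q M hM.2 v
  rw [heig, hermForm_smul, Complex.mul_conj] at h1
  by_contra h0
  have hc : (Complex.normSq μ : ℂ) = 1 := by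
    have := mul_right_cancel₀ h0 (h1.trans (one_mul (hermForm p q v v)).symm)
    exact this
  have hr : Complex.normSq μ = 1 := by exact_mod_cast hc
  rw [Complex.normSq_eq_norm_sq] at hr
  have h2 : (‖μ‖ - 1) * (‖μ‖ + 1) = 0 := by nlinarith
  rcases mul_eq_zero.mp h2 with h | h
  · exact habs (by linarith)
  · have := norm_nonneg μ
    linarith

/-- The sum of absolute values of the entries of a matrix. -/
noncomputable def matNorm (m : ℕ) (A : Matrix (Fin m) (Fin m) ℂ) : ℝ :=
  ∑ i, ∑ j, ‖A i j‖

lemma matNorm_nonneg (m : ℕ) (A : Matrix (Fin m) (Fin m) ℂ) : 0 ≤ matNorm m A :=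
  Finset.sum_nonneg fun i _ => Finset.sum_nonneg fun j _ => norm_nonneg _

lemma continuous_matNorm (m : ℕ) : Continuous (matNorm m) := by
  unfold matNorm
  refine continuous_finset_sum _ fun i _ => continuous_finset_sum _ fun j _ => ?_
  exact continuous_norm.comp ((continuous_apply j).comp (continuous_apply i))

lemma norm_mulVec_le (m : ℕ) (A : Matrix (Fin m) (Fin m) ℂ) (w : Fin m → ℂ) :
    ‖A *ᵥ w‖ ≤ matNorm m A * ‖w‖ := by
  have hnn : (0 : ℝ) ≤ matNorm m A * ‖w‖ :=
    mul_nonneg (matNorm_nonneg m A) (norm_nonneg _)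
  rw [pi_norm_le_iff_of_nonneg hnn]
  intro i
  calc ‖(A *ᵥ w) i‖ = ‖∑ j, A i j * w j‖ := by rw [mulVec, dotProduct]
    _ ≤ ∑ j, ‖A i j * w j‖ := norm_sum_le _ _
    _ ≤ ∑ j, ‖A i j‖ * ‖w‖ := by
        refine Finset.sum_le_sum fun j _ => ?_
        rw [norm_mul]
        exact mul_le_mul_of_nonneg_left (norm_le_pi_norm w j) (norm_nonneg _)
    _ = (∑ j, ‖A i j‖) * ‖w‖ := by rw [Finset.sum_mul]
    _ ≤ matNorm m A * ‖w‖ := by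
        refine mul_le_mul_of_nonneg_right ?_ (norm_nonneg _)
        unfold matNorm
        exact Finset.single_le_sum
          (f := fun i => ∑ j, ‖A i j‖)
          (fun k _ => Finset.sum_nonneg fun j _ => norm_nonneg _)
          (Finset.mem_univ i)

/-- If `g₀ ∈ SU(p,q)` has no isotropic eigenvector, then there is a
neighborhood of `g₀` in `SU(p,q)` on which every complex eigenvalue of every element has
modulus `1`. -/
theorem eigenvalues_modulus_one_near (p q : ℕ) (hp : 1 ≤ p) (hq : 1 ≤ q) (g₀ : SU p q)
    (hiso : ∀ (v : Fin (p + q) → ℂ) (μ : ℂ), v ≠ 0 →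
      (g₀ : Matrix (Fin (p + q)) (Fin (p + q)) ℂ).mulVec v = μ • v → hermForm p q v v ≠ 0) :
    ∃ U : Set (SU p q), IsOpen U ∧ g₀ ∈ U ∧
      ∀ g ∈ U, ∀ (μ : ℂ) (v : Fin (p + q) → ℂ), v ≠ 0 →
        (g : Matrix (Fin (p + q)) (Fin (p + q)) ℂ).mulVec v = μ • v → ‖μ‖ = 1 := by
  classical
  haveI : FirstCountableTopology (Matrix (Fin (p + q)) (Fin (p + q)) ℂ) := by
    unfold Matrix
    exact inferInstanceAs (FirstCountableTopology (Fin (p + q) → Fin (p + q) → ℂ))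
  set B : Set (SU p q) := {g | ∃ μ : ℂ, ∃ v : Fin (p + q) → ℂ, v ≠ 0 ∧
    (g : Matrix (Fin (p + q)) (Fin (p + q)) ℂ).mulVec v = μ • v ∧ ‖μ‖ ≠ 1} with hBdef
  refine ⟨(closure B)ᶜ, isClosed_closure.isOpen_compl, ?_, ?_⟩
  · rw [Set.mem_compl_iff]
    intro hmem
    obtain ⟨gs, hgsB, hgs⟩ := mem_closure_iff_seq_limit.mp hmem
    choose μs vs hv0 heig habs using hgsB
    set ws : ℕ → (Fin (p + q) → ℂ) := fun k => ((‖vs k‖ : ℝ) : ℂ)⁻¹ • vs k with hws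
    have hwnorm : ∀ k, ‖ws k‖ = 1 := by
      intro k
      have h0 : ‖vs k‖ ≠ 0 := norm_ne_zero_iff.mpr (hv0 k)
      rw [hws]
      simp only [norm_smul, norm_inv, Complex.norm_real, Real.norm_eq_abs,
        abs_of_nonneg (norm_nonneg _)]
      exact inv_mul_cancel₀ h0
    have hwne : ∀ k, ws k ≠ 0 := by
      intro k h
      have := hwnorm k
      rw [h, norm_zero] at this
      norm_num at this
    have heigw : ∀ k, ((gs k : SU p q) : Matrix (Fin (p + q)) (Fin (p + q)) ℂ).mulVec (ws k)
        = μs k • ws k := by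
      intro k
      rw [hws]
      simp only
      rw [mulVec_smul, heig k, smul_comm]
    have hherm0 : ∀ k, hermForm p q (ws k) (ws k) = 0 := fun k =>
      eigen_isotropic p q _ (gs k).2 (μs k) (ws k) (heigw k) (habs k)
    -- bound on the norms of the matrices
    have htn : Filter.Tendsto
        (fun k => matNorm (p + q) ((gs k : SU p q) : Matrix (Fin (p + q)) (Fin (p + q)) ℂ))
        Filter.atTop (𝓝 (matNorm (p + q) (g₀ : Matrix (Fin (p + q)) (Fin (p + q)) ℂ))) :=
      ((continuous_matNorm (p + q)).tendsto _).comp ((continuous_subtype_val.tendsto g₀).comp hgs)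
    obtain ⟨C, hC⟩ := htn.bddAbove_range
    have hCb : ∀ k, matNorm (p + q) ((gs k : SU p q) : Matrix (Fin (p + q)) (Fin (p + q)) ℂ) ≤ C :=
      fun k => hC (Set.mem_range_self k)
    have hμb : ∀ k, ‖μs k‖ ≤ C := by
      intro k
      have h1 : ‖μs k • ws k‖ ≤
          matNorm (p + q) ((gs k : SU p q) : Matrix (Fin (p + q)) (Fin (p + q)) ℂ) * ‖ws k‖ := by
        rw [← heigw k]
        exact norm_mulVec_le _ _ _
      rw [norm_smul, hwnorm k, mul_one, mul_one] at h1
      calc ‖μs k‖ = ‖μs k‖ := rfl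
        _ ≤ matNorm (p + q) ((gs k : SU p q) : Matrix (Fin (p + q)) (Fin (p + q)) ℂ) := h1
        _ ≤ C := hCb k
    -- compactness
    set s : Set (ℂ × (Fin (p + q) → ℂ)) :=
      Metric.closedBall (0 : ℂ) C ×ˢ Metric.sphere (0 : Fin (p + q) → ℂ) 1
      with hsdef
    have hcs : IsCompact s := (isCompact_closedBall _ _).prod (isCompact_sphere _ _)
    have hxs : ∀ k, (μs k, ws k) ∈ s := by
      intro k
      constructor
      · rw [Metric.mem_closedBall, dist_zero_right]
        exact hμb k
      · rw [mem_sphere_zero_iff_norm]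
        exact hwnorm k
    obtain ⟨⟨μ', w'⟩, hmems, φ, hφ, hconv⟩ := hcs.tendsto_subseq hxs
    have hμconv : Filter.Tendsto (fun k => μs (φ k)) Filter.atTop (𝓝 μ') :=
      (continuous_fst.tendsto _).comp hconv
    have hwconv : Filter.Tendsto (fun k => ws (φ k)) Filter.atTop (𝓝 w') :=
      (continuous_snd.tendsto _).comp hconv
    have hgφ : Filter.Tendsto
        (fun k => ((gs (φ k) : SU p q) : Matrix (Fin (p + q)) (Fin (p + q)) ℂ))
        Filter.atTop (𝓝 (g₀ : Matrix (Fin (p + q)) (Fin (p + q)) ℂ)) :=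
      (continuous_subtype_val.tendsto g₀).comp (hgs.comp hφ.tendsto_atTop)
    have hw'norm : ‖w'‖ = 1 := mem_sphere_zero_iff_norm.mp hmems.2
    have hw'ne : w' ≠ 0 := by
      intro h
      rw [h, norm_zero] at hw'norm
      norm_num at hw'norm
    -- the limit is an eigenvector of g₀
    have hlhs : Filter.Tendsto
        (fun k => ((gs (φ k) : SU p q) : Matrix (Fin (p + q)) (Fin (p + q)) ℂ).mulVec (ws (φ k)))
        Filter.atTop (𝓝 ((g₀ : Matrix (Fin (p + q)) (Fin (p + q)) ℂ).mulVec w')) := by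
      have hcont : Continuous fun x : Matrix (Fin (p + q)) (Fin (p + q)) ℂ × (Fin (p + q) → ℂ) =>
          x.1 *ᵥ x.2 := continuous_fst.matrix_mulVec continuous_snd
      exact (hcont.tendsto _).comp (hgφ.prodMk_nhds hwconv)
    have hrhs : Filter.Tendsto (fun k => μs (φ k) • ws (φ k))
        Filter.atTop (𝓝 (μ' • w')) := by
      have hcont : Continuous fun x : ℂ × (Fin (p + q) → ℂ) => x.1 • x.2 :=
        continuous_fst.smul continuous_snd
      exact (hcont.tendsto _).comp (hμconv.prodMk_nhds hwconv)
    have heq' : (g₀ : Matrix (Fin (p + q)) (Fin (p + q)) ℂ).mulVec w' = μ' • w' := by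
      refine tendsto_nhds_unique ?_ hrhs
      have : (fun k => ((gs (φ k) : SU p q)
          : Matrix (Fin (p + q)) (Fin (p + q)) ℂ).mulVec (ws (φ k)))
          = fun k => μs (φ k) • ws (φ k) := funext fun k => heigw (φ k)
      rw [this] at hlhs
      exact hlhs
    -- the limit is isotropic
    have hherm' : hermForm p q w' w' = 0 := by
      have h1 : Filter.Tendsto (fun k => hermForm p q (ws (φ k)) (ws (φ k)))
          Filter.atTop (𝓝 (hermForm p q w' w')) :=
        ((continuous_hermForm p q).tendsto _).comp hwconv
      have h2 : (fun k => hermForm p q (ws (φ k)) (ws (φ k))) = fun _ => (0 : ℂ) :=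
        funext fun k => hherm0 (φ k)
      rw [h2] at h1
      exact tendsto_nhds_unique h1 tendsto_const_nhds
    exact hiso w' μ' hw'ne heq' hherm'
  · intro g hg μ v hv heq
    by_contra habs
    exact hg (subset_closure ⟨μ, v, hv, heq, habs⟩)
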